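/- arXiv:1308.5541 — 3 statements merged into one kernel-verified Lean document; each statement's English description precedes it below -/
import Mathlib

section
/- As n → ∞, b_n* − β_n* = O((log log n)²/(log n)^{3/2}), where β_n* = (2 log n)^{1/2} − (log log n + log(4π))/(2 (2 log n)^{1/2}). -/
open Real Filter Asymptotics

theorem mono_bound (x y m : ℝ) (hm : 0 < m) (hx : m ≤ x) (hy : m ≤ y) :
    m * |x - y| ≤ |(x^2/2 + Real.log x) - (y^2/2 + Real.log y)| := by
  rcases le_total y x with h | h
  · rw [abs_of_nonneg (by linarith)]
    refine le_trans ?_ (le_abs_self _)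
    have hlog : Real.log y ≤ Real.log x := Real.log_le_log (by linarith) h
    nlinarith
  · rw [abs_of_nonpos (by linarith), ← abs_neg]
    refine le_trans ?_ (le_abs_self _)
    have hlog : Real.log x ≤ Real.log y := Real.log_le_log (by linarith) h
    nlinarith

theorem aux_one_le_log (L : ℝ) (hL : 100 ≤ L) : 1 ≤ Real.log L := by
  rw [Real.le_log_iff_exp_le (by linarith)]
  linarith [Real.exp_one_lt_d9]

theorem aux_log2pi : Real.log (2*Real.pi) ≤ 2 := by
  have hpi : Real.pi < 3.15 := Real.pi_lt_d2
  have hpi0 : 0 < Real.pi := Real.pi_pos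
  rw [Real.log_le_iff_le_exp (by linarith)]
  have h2 : Real.exp 2 = Real.exp 1 * Real.exp 1 := by rw [← Real.exp_add]; norm_num
  nlinarith [Real.exp_one_gt_d9]

theorem aux_m_lt (L m : ℝ) (hmsq : m^2 = L) (hm10 : 10 ≤ m) : m < L/2 := by nlinarith

theorem aux_4m (m : ℝ) (hm10 : 10 ≤ m) : 4*m ≤ m^2 := by nlinarith

theorem aux_sm (L s m : ℝ) (hs2 : s^2 = 2*L) (hmsq : m^2 = L) (hs : 0 ≤ s)
    (hm : 0 ≤ m) (hL : 0 < L) : s*m ≤ 1.5*L := by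
  have h0 : (s*m)^2 = 2*L^2 := by rw [mul_pow, hs2, hmsq]; ring
  nlinarith [sq_nonneg (s*m - 1.5*L)]

theorem aux_log_one_sub (t : ℝ) (h0 : 0 ≤ t) (h2 : t ≤ 1/2) :
    -(2*t) ≤ Real.log (1-t) := by
  have hexp : Real.exp (-(2*t)) ≤ 1 - t := by
    have h1 : 2*t + 1 ≤ Real.exp (2*t) := Real.add_one_le_exp (2*t)
    rw [Real.exp_neg, inv_le_iff_one_le_mul₀ (by positivity)]
    nlinarith [Real.exp_pos (2*t)]
  calc -(2*t) = Real.log (Real.exp (-(2*t))) := (Real.log_exp _).symm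
    _ ≤ Real.log (1 - t) := Real.log_le_log (Real.exp_pos _) hexp

theorem aux_Ebound (L d lt : ℝ) (hL : 100 ≤ L) (h1 : 1 ≤ Real.log L)
    (hd0 : 0 ≤ d) (hdle : d ≤ 2*Real.log L) (hup : lt ≤ 0) (hlo : -(d/(2*L)) ≤ lt) :
    |d^2/(16*L) + lt| ≤ 2*(Real.log L)^2/L := by
  set X := Real.log L with hX
  clear_value X
  have hLpos : (0:ℝ) < L := by linarith
  rw [abs_le]
  constructor
  · have ha : d/(2*L) ≤ X/L := by
      rw [div_le_div_iff₀ (by linarith) hLpos]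
      nlinarith
    have hb : X/L ≤ X^2/L := by
      rw [div_le_div_iff₀ hLpos hLpos]
      nlinarith [mul_nonneg (mul_nonneg (sub_nonneg.2 h1) (by linarith : (0:ℝ) ≤ X)) (le_of_lt hLpos)]
    have hc : X^2/L ≤ 2*X^2/L := by
      rw [div_le_div_iff₀ hLpos hLpos]
      nlinarith
    have hd2 : 0 ≤ d^2/(16*L) := by positivity
    linarith
  · have ha : d^2/(16*L) ≤ X^2/(4*L) := by
      rw [div_le_div_iff₀ (by linarith) (by linarith)]
      nlinarith [mul_nonneg (mul_nonneg (by linarith : (0:ℝ) ≤ 2*X - d) (by linarith : (0:ℝ) ≤ 2*X + d)) (le_of_lt hLpos)]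
    have hb : X^2/(4*L) ≤ 2*X^2/L := by
      rw [div_le_div_iff₀ (by linarith) hLpos]
      nlinarith
    linarith

set_option maxHeartbeats 1000000 in
theorem key (L b : ℝ) (hL : 100 ≤ L) (hb : 0 < b)
    (heq : b^2/2 + Real.log b = L - Real.log (2*Real.pi) / 2) :
    |b - (Real.sqrt (2*L) - (Real.log L + Real.log (4*Real.pi)) / (2*Real.sqrt (2*L)))|
      ≤ 2 * (Real.log L)^2 / (Real.sqrt L)^3 := by
  have hLpos : (0:ℝ) < L := by linarith
  set s := Real.sqrt (2*L) with hs
  set d := Real.log L + Real.log (4*Real.pi) with hd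
  set β := s - d / (2*s) with hβ
  set m := Real.sqrt L with hm
  have hss : s = Real.sqrt (2*L) := hs
  have hmm : m = Real.sqrt L := hm
  clear_value s d β m
  have hmsq : m^2 = L := by rw [hmm]; exact Real.sq_sqrt hLpos.le
  have hm10 : 10 ≤ m := by
    rw [hmm]; rw [show (10:ℝ) = Real.sqrt 100 by
      rw [show (100:ℝ) = 10^2 by norm_num, Real.sqrt_sq]; norm_num]
    exact Real.sqrt_le_sqrt hL
  have hs2 : s^2 = 2*L := by rw [hss]; exact Real.sq_sqrt (by linarith)
  have hspos : 0 < s := by rw [hss]; exact Real.sqrt_pos.2 (by linarith)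
  have hlogL1 : 1 ≤ Real.log L := aux_one_le_log L hL
  have hlogm : Real.log m ≤ m - 1 := Real.log_le_sub_one_of_pos (by linarith)
  have hlogL : Real.log L = 2 * Real.log m := by
    rw [hmm, Real.log_sqrt hLpos.le]; ring
  have hlogLm : Real.log L ≤ 2*m - 2 := by rw [hlogL]; linarith
  have hpi4 : Real.pi ≤ 4 := Real.pi_le_four
  have hpi3 : 3 ≤ Real.pi := by linarith [Real.pi_gt_three]
  have hlog4pi_nonneg : 0 ≤ Real.log (4*Real.pi) := Real.log_nonneg (by linarith)
  have hlog4pi_le : Real.log (4*Real.pi) ≤ Real.log L :=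
    Real.log_le_log (by linarith) (by linarith)
  have hd_pos : 0 < d := by rw [hd]; linarith
  have hd_le : d ≤ 2 * Real.log L := by rw [hd]; linarith
  have hlog2pi : Real.log (2*Real.pi) ≤ 2 := aux_log2pi
  have hlog2pi_pos : 0 < Real.log (2*Real.pi) := Real.log_pos (by linarith)
  have h4m : 4*m ≤ L := by
    have := aux_4m m hm10; linarith [hmsq]
  -- b ≥ m
  have hbm : m ≤ b := by
    by_contra hc
    push_neg at hc
    have hlogb : Real.log b ≤ Real.log m := Real.log_le_log hb hc.le
    have hbsq : b^2 ≤ m^2 := by nlinarith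
    have := aux_m_lt L m hmsq hm10
    linarith
  -- β ≥ m
  have hsm : m ≤ s := by
    rw [hmm, hss]; exact Real.sqrt_le_sqrt (by linarith)
  have hβm : m ≤ β := by
    rw [hβ]
    have hsm2 : s*m ≤ 1.5*L := aux_sm L s m hs2 hmsq hspos.le (by linarith) hLpos
    have h2 : d / (2*s) ≤ s - m := by
      rw [div_le_iff₀ (by linarith)]
      have hexpand : (s - m) * (2*s) = 2*s^2 - 2*(s*m) := by ring
      have hdL : d ≤ L := by linarith
      linarith [hs2]
    linarith
  have hβpos : 0 < β := by linarith
  -- t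
  set t := d / (4*L) with ht
  clear_value t
  have ht_pos : 0 < t := by rw [ht]; positivity
  have ht_half : t ≤ 1/2 := by
    rw [ht, div_le_iff₀ (by linarith)]
    linarith
  have hlog1t_le : Real.log (1 - t) ≤ 0 := Real.log_nonpos (by linarith) (by linarith)
  have hlog1t_ge : -(2*t) ≤ Real.log (1 - t) := aux_log_one_sub t ht_pos.le ht_half
  -- g(β) value
  have hβeq : β = s * (1 - t) := by
    rw [hβ, ht]
    field_simp
    linear_combination 2 * d * hs2
  have hlogβ : Real.log β = (Real.log 2 + Real.log L)/2 + Real.log (1-t) := by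
    rw [hβeq, Real.log_mul (by positivity) (by linarith), hss,
      Real.log_sqrt (by linarith), Real.log_mul (by norm_num) (by linarith)]
  have hβsq : β^2/2 = L - d/2 + d^2/(16*L) := by
    rw [hβ]
    field_simp
    linear_combination (64*L*s^2 - 8*d^2) * hs2
  have hlog4pi_eq : Real.log (4*Real.pi) = 2*Real.log 2 + Real.log Real.pi := by
    rw [show (4:ℝ)*Real.pi = 2*2*Real.pi by ring, Real.log_mul (by norm_num) (by linarith),
      Real.log_mul (by norm_num) (by norm_num)]
    ring
  have hlog2pi_eq : Real.log (2*Real.pi) = Real.log 2 + Real.log Real.pi :=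
    Real.log_mul (by norm_num) (by linarith)
  have hE : (β^2/2 + Real.log β) - (L - Real.log (2*Real.pi)/2)
      = d^2/(16*L) + Real.log (1-t) := by
    rw [hβsq, hlogβ, hlog2pi_eq, hd, hlog4pi_eq]
    ring
  have hEbound : |(β^2/2 + Real.log β) - (L - Real.log (2*Real.pi)/2)|
      ≤ 2 * (Real.log L)^2 / L := by
    rw [hE]
    refine aux_Ebound L d (Real.log (1-t)) hL hlogL1 hd_pos.le hd_le hlog1t_le ?_
    rw [show -(d/(2*L)) = -(2*(d/(4*L))) by ring, ← ht]
    exact hlog1t_ge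
  have hmono := mono_bound b β m (by linarith) hbm hβm
  rw [heq] at hmono
  rw [abs_sub_comm (L - Real.log (2*Real.pi)/2) (β^2/2 + Real.log β)] at hmono
  have hfinal : m * |b - β| ≤ 2 * (Real.log L)^2 / L := le_trans hmono hEbound
  calc |b - β| ≤ (2*(Real.log L)^2/L)/m := by
        rw [le_div_iff₀ (by linarith : (0:ℝ) < m)]
        linarith [hfinal, mul_comm m |b - β|]
    _ = 2 * (Real.log L)^2 / m^3 := by
        rw [show m^3 = L * m by rw [pow_succ, hmsq]]
        rw [div_div]

/-- `bₙ* − βₙ* = O((log log n)²/(log n)^{3/2})` as `n → ∞`, where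
`βₙ* = (2 log n)^{1/2} − (log log n + log(4π))/(2(2 log n)^{1/2})`. -/
theorem bnstar_sub_betastar (bs : ℕ → ℝ)
    (hbs : ∀ n : ℕ, 2 ≤ n → 0 < bs n ∧
      (Real.sqrt (2 * Real.pi))⁻¹ * (bs n)⁻¹ * Real.exp (-(bs n) ^ 2 / 2) = 1 / (n : ℝ)) :
    (fun n : ℕ =>
        bs n - (Real.sqrt (2 * Real.log n)
          - (Real.log (Real.log n) + Real.log (4 * Real.pi))
              / (2 * Real.sqrt (2 * Real.log n))))
      =O[atTop]
    (fun n : ℕ => (Real.log (Real.log n)) ^ 2 / (Real.log n) ^ ((3 : ℝ) / 2)) := by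
  rw [isBigO_iff]
  refine ⟨2, ?_⟩
  have h100 : ∀ᶠ n : ℕ in atTop, 100 ≤ Real.log n := by
    have := (Real.tendsto_log_atTop.comp (tendsto_natCast_atTop_atTop (R := ℝ))).eventually_ge_atTop 100
    exact this
  filter_upwards [eventually_ge_atTop 2, h100] with n hn2 hL100
  obtain ⟨hbpos, he⟩ := hbs n hn2
  set L := Real.log n with hLdef
  have hLpos : (0:ℝ) < L := by linarith
  have hnpos : (0:ℝ) < (n:ℝ) := by positivity
  have hpi : (0:ℝ) < Real.pi := Real.pi_pos
  have heq : (bs n)^2/2 + Real.log (bs n) = L - Real.log (2*Real.pi) / 2 := by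
    have hlog := congrArg Real.log he
    rw [Real.log_mul (by positivity) (Real.exp_ne_zero _), Real.log_mul (by positivity) (by positivity),
      Real.log_inv, Real.log_inv, Real.log_exp, Real.log_sqrt (by positivity),
      one_div, Real.log_inv] at hlog
    linarith
  have hk := key L (bs n) hL100 hbpos heq
  have hrpow : L ^ ((3:ℝ)/2) = (Real.sqrt L)^3 := by
    rw [show (3:ℝ)/2 = (1/2)*3 by ring, Real.rpow_mul hLpos.le, ← Real.sqrt_eq_rpow,
      show ((3:ℝ):ℝ) = ((3:ℕ):ℝ) by norm_num, Real.rpow_natCast]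
  have hrhs_nonneg : 0 ≤ (Real.log L)^2 / L ^ ((3:ℝ)/2) := by positivity
  rw [Real.norm_eq_abs, Real.norm_eq_abs, abs_of_nonneg hrhs_nonneg, hrpow]
  calc |bs n - (Real.sqrt (2*L) - (Real.log L + Real.log (4*Real.pi)) / (2*Real.sqrt (2*L)))|
      ≤ 2 * (Real.log L)^2 / (Real.sqrt L)^3 := hk
    _ = 2 * ((Real.log L)^2 / (Real.sqrt L)^3) := by ring
end

section
/- As n → ∞, b_n* − β̄_n* = O((log log n)²/(log n)^{5/2}), where β̄_n* = (log(n²/(2π)) − log log(n²/(2π)) + log log(n²/(2π))/log(n²/(2π)))^{1/2}. -/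
open Real Filter Asymptotics

lemma log_one_sub_bound {u : ℝ} (hu : u ≤ 1/2) :
    |Real.log (1 - u) + u| ≤ 2 * u ^ 2 := by
  have h1 : (0:ℝ) < 1 - u := by linarith
  have hub : Real.log (1 - u) ≤ -u := by
    have := Real.log_le_sub_one_of_pos h1
    linarith
  have hlb : -u - 2 * u ^ 2 ≤ Real.log (1 - u) := by
    have h2 : Real.log (1 - u)⁻¹ ≤ (1 - u)⁻¹ - 1 := Real.log_le_sub_one_of_pos (by positivity)
    rw [Real.log_inv] at h2
    have h4 : (1 - u)⁻¹ - 1 ≤ u + 2 * u ^ 2 := by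
      rw [sub_le_iff_le_add, inv_le_iff_one_le_mul₀ h1]
      nlinarith
    linarith
  rw [abs_le]; constructor <;> nlinarith

lemma abs_sub_le_of_logadd {x y : ℝ} (hx : 0 < x) (hy : 0 < y) :
    |x - y| ≤ |(x + Real.log x) - (y + Real.log y)| := by
  rcases le_total x y with h | h
  · have h1 : Real.log x ≤ Real.log y := Real.log_le_log hx h
    rw [abs_of_nonpos (by linarith), abs_of_nonpos (by linarith)]
    linarith
  · have h1 : Real.log y ≤ Real.log x := Real.log_le_log hy h
    rw [abs_of_nonneg (by linarith), abs_of_nonneg (by linarith)]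
    linarith

set_option maxHeartbeats 1000000 in
lemma main_est_aux (L x l y u : ℝ) (hL : 10 ≤ L) (hx : 0 < x)
    (heq : x + Real.log x = L) (hl : l = Real.log L)
    (hy : y = L - l + l / L) (hu : u = l / L - l / L ^ 2) :
    |Real.sqrt x - Real.sqrt y| ≤ 5 * l ^ 2 / L ^ ((5:ℝ)/2) := by
  have hL0 : (0:ℝ) < L := by linarith
  have hlog1 : 1 ≤ l := by
    have he : Real.exp 1 ≤ L := by
      have := Real.exp_one_lt_d9; linarith
    calc (1:ℝ) = Real.log (Real.exp 1) := (Real.log_exp 1).symm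
    _ ≤ Real.log L := Real.log_le_log (Real.exp_pos 1) he
    _ = l := hl.symm
  have hlogHalf : l ≤ L / 2 := by
    have hs : Real.sqrt L ^ 2 = L := Real.sq_sqrt hL0.le
    have h1 : Real.log (Real.sqrt L) ≤ Real.sqrt L - 1 :=
      Real.log_le_sub_one_of_pos (Real.sqrt_pos.mpr hL0)
    have h2 : l = 2 * Real.log (Real.sqrt L) := by
      rw [hl, Real.log_sqrt hL0.le]; ring
    nlinarith [sq_nonneg (Real.sqrt L - 2), Real.sqrt_nonneg L]
  have hlL : 0 ≤ l / L := by positivity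
  have hyL : L / 2 ≤ y := by
    rw [hy]; linarith
  have hy0 : 0 < y := by linarith
  have hu0 : 0 ≤ u := by
    have e : l / L ^ 2 = (l / L) / L := by ring
    have := div_le_self hlL (by linarith : 1 ≤ L)
    rw [hu, e]; linarith
  have h4 : u ≤ l / L := by
    have h0 : 0 ≤ l / L ^ 2 := by positivity
    rw [hu]; linarith
  have huhalf : u ≤ 1 / 2 := by
    have h1 : l / L ≤ 1 / 2 := by rw [div_le_iff₀ hL0]; linarith
    linarith
  have h1u : (0:ℝ) < 1 - u := by linarith
  have hyu : y = L * (1 - u) := by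
    rw [hy, hu]; field_simp; ring
  have hlogy : Real.log y = l + Real.log (1 - u) := by
    rw [hyu, Real.log_mul hL0.ne' h1u.ne', hl]
  have hkey : |y + Real.log y - L| ≤ 3 * l ^ 2 / L ^ 2 := by
    have h1 : y + Real.log y - L = (Real.log (1 - u) + u) + l / L ^ 2 := by
      rw [hlogy, hy, hu]; ring
    have h3 : |Real.log (1 - u) + u| ≤ 2 * u ^ 2 := log_one_sub_bound huhalf
    have h5 : u ^ 2 ≤ l ^ 2 / L ^ 2 := by
      rw [← div_pow]; nlinarith
    have h6 : l / L ^ 2 ≤ l ^ 2 / L ^ 2 := by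
      apply div_le_div_of_nonneg_right ?_ (by positivity)
      nlinarith
    calc |y + Real.log y - L| = |(Real.log (1 - u) + u) + l / L ^ 2| := by rw [h1]
    _ ≤ |Real.log (1 - u) + u| + |l / L ^ 2| := abs_add_le _ _
    _ = |Real.log (1 - u) + u| + l / L ^ 2 := by
        rw [abs_of_nonneg (div_nonneg (by linarith : (0:ℝ) ≤ l) (sq_nonneg L))]
    _ ≤ 2 * u ^ 2 + l / L ^ 2 := by linarith
    _ ≤ 3 * l ^ 2 / L ^ 2 := by
        have : 3 * l ^ 2 / L ^ 2 = 2 * (l ^ 2 / L ^ 2) + l ^ 2 / L ^ 2 := by ring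
        rw [this]; linarith
  have hxy : |x - y| ≤ 3 * l ^ 2 / L ^ 2 := by
    calc |x - y| ≤ |(x + Real.log x) - (y + Real.log y)| := abs_sub_le_of_logadd hx hy0
    _ = |y + Real.log y - L| := by rw [heq, abs_sub_comm]
    _ ≤ 3 * l ^ 2 / L ^ 2 := hkey
  have hsy : Real.sqrt (L/2) ≤ Real.sqrt y := Real.sqrt_le_sqrt hyL
  have hsy0 : 0 < Real.sqrt y := Real.sqrt_pos.mpr hy0
  have hsx0 : 0 ≤ Real.sqrt x := Real.sqrt_nonneg x
  have hprod : (Real.sqrt x - Real.sqrt y) * (Real.sqrt x + Real.sqrt y) = x - y := by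
    have h1 : Real.sqrt x ^ 2 = x := Real.sq_sqrt hx.le
    have h2 : Real.sqrt y ^ 2 = y := Real.sq_sqrt hy0.le
    nlinarith
  have hstep : |Real.sqrt x - Real.sqrt y| ≤ (3 * l ^ 2 / L ^ 2) / Real.sqrt y := by
    rw [le_div_iff₀ hsy0]
    calc |Real.sqrt x - Real.sqrt y| * Real.sqrt y
        ≤ |Real.sqrt x - Real.sqrt y| * (Real.sqrt x + Real.sqrt y) :=
          mul_le_mul_of_nonneg_left (le_add_of_nonneg_left hsx0) (abs_nonneg _)
    _ = |(Real.sqrt x - Real.sqrt y) * (Real.sqrt x + Real.sqrt y)| := by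
          rw [abs_mul, abs_of_nonneg (show (0:ℝ) ≤ Real.sqrt x + Real.sqrt y by linarith)]
    _ = |x - y| := by rw [hprod]
    _ ≤ 3 * l ^ 2 / L ^ 2 := hxy
  have hrpow : L ^ ((5:ℝ)/2) = L ^ 2 * Real.sqrt L := by
    rw [show ((5:ℝ)/2) = ((2:ℕ):ℝ) + (1:ℝ)/2 by norm_num, Real.rpow_add hL0,
      Real.rpow_natCast, ← Real.sqrt_eq_rpow]
  have hsqrt2 : 3 * Real.sqrt L ≤ 5 * Real.sqrt (L/2) := by
    have e1 : Real.sqrt (9 * L) = 3 * Real.sqrt L := by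
      rw [Real.sqrt_mul (by norm_num) L, show (9:ℝ) = 3^2 by norm_num,
        Real.sqrt_sq (by norm_num)]
    have e2 : Real.sqrt (25 * (L/2)) = 5 * Real.sqrt (L/2) := by
      rw [Real.sqrt_mul (by norm_num) (L/2), show (25:ℝ) = 5^2 by norm_num,
        Real.sqrt_sq (by norm_num)]
    rw [← e1, ← e2]
    exact Real.sqrt_le_sqrt (by linarith)
  have hL2 : (0:ℝ) < L ^ 2 := by positivity
  have hsL0 : (0:ℝ) < Real.sqrt L := Real.sqrt_pos.mpr hL0
  have hsL20 : (0:ℝ) < Real.sqrt (L/2) := Real.sqrt_pos.mpr (by linarith)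
  calc |Real.sqrt x - Real.sqrt y| ≤ (3 * l ^ 2 / L ^ 2) / Real.sqrt y := hstep
  _ ≤ (3 * l ^ 2 / L ^ 2) / Real.sqrt (L/2) := by
      apply div_le_div_of_nonneg_left (by positivity) (by positivity) hsy
  _ ≤ 5 * l ^ 2 / L ^ ((5:ℝ)/2) := by
      rw [hrpow, div_div]
      rw [div_le_div_iff₀ (by positivity) (by positivity)]
      have hll : (0:ℝ) ≤ l ^ 2 * L ^ 2 := by positivity
      nlinarith [mul_le_mul_of_nonneg_left hsqrt2 hll]


/-- `bₙ* − β̄ₙ* = O((log log n)²/(log n)^{5/2})` as `n → ∞`, where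
`β̄ₙ* = (log(n²/(2π)) − log log(n²/(2π)) + log log(n²/(2π))/log(n²/(2π)))^{1/2}`. -/
theorem bnstar_sub_betabarstar (bs : ℕ → ℝ)
    (hbs : ∀ n : ℕ, 2 ≤ n → 0 < bs n ∧
      (Real.sqrt (2 * Real.pi))⁻¹ * (bs n)⁻¹ * Real.exp (-(bs n) ^ 2 / 2) = 1 / (n : ℝ)) :
    (fun n : ℕ =>
        bs n - Real.sqrt (Real.log ((n : ℝ) ^ 2 / (2 * Real.pi))
          - Real.log (Real.log ((n : ℝ) ^ 2 / (2 * Real.pi)))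
          + Real.log (Real.log ((n : ℝ) ^ 2 / (2 * Real.pi)))
              / Real.log ((n : ℝ) ^ 2 / (2 * Real.pi))))
      =O[atTop]
    (fun n : ℕ => (Real.log (Real.log n)) ^ 2 / (Real.log n) ^ ((5 : ℝ) / 2)) := by
  have hπ : Real.log (2 * Real.pi) ≤ 2 := by
    rw [Real.log_le_iff_le_exp (by positivity)]
    have h1 := Real.exp_one_gt_d9
    have h2 : Real.exp 2 = Real.exp 1 * Real.exp 1 := by
      rw [← Real.exp_add]; norm_num
    have h3 := Real.pi_lt_d2
    nlinarith
  have hπ0 : 0 ≤ Real.log (2 * Real.pi) := by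
    rw [Real.log_nonneg_iff (by positivity)]
    nlinarith [Real.pi_gt_three]
  have hlogT : Tendsto (fun n : ℕ => Real.log n) atTop atTop :=
    Real.tendsto_log_atTop.comp tendsto_natCast_atTop_atTop
  have hloglogT : Tendsto (fun n : ℕ => Real.log (Real.log n)) atTop atTop :=
    Real.tendsto_log_atTop.comp hlogT
  rw [isBigO_iff]
  refine ⟨20, ?_⟩
  filter_upwards [hlogT.eventually_ge_atTop 100, hloglogT.eventually_ge_atTop 1,
    eventually_ge_atTop 2] with n hn1 hn2 hn3
  obtain ⟨hb0, heq0⟩ := hbs n hn3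
  have hnR : (2:ℝ) ≤ (n:ℝ) := by exact_mod_cast hn3
  have hn0 : (0:ℝ) < (n:ℝ) := by linarith
  set L := Real.log ((n : ℝ) ^ 2 / (2 * Real.pi)) with hLdef
  -- L = 2 log n - log (2π)
  have hLval : L = 2 * Real.log n - Real.log (2 * Real.pi) := by
    rw [hLdef, Real.log_div (by positivity) (by positivity), Real.log_pow]
    push_cast; ring
  have hL10 : (10:ℝ) ≤ L := by rw [hLval]; linarith
  have hL0 : (0:ℝ) < L := by linarith
  have hLlogn : Real.log n ≤ L := by rw [hLval]; linarith
  have hlogn0 : (0:ℝ) < Real.log n := by linarith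
  -- log L ≤ 2 log log n
  have hlogL : Real.log L ≤ 2 * Real.log (Real.log n) := by
    have h1 : L ≤ (Real.log n) ^ 2 := by rw [hLval]; nlinarith
    calc Real.log L ≤ Real.log ((Real.log n) ^ 2) := Real.log_le_log hL0 h1
    _ = 2 * Real.log (Real.log n) := by rw [Real.log_pow]; push_cast; ring
  have hlogL0 : (0:ℝ) ≤ Real.log L := Real.log_nonneg (by linarith)
  -- derive x + log x = L for x = (bs n)^2
  have hx0 : (0:ℝ) < (bs n) ^ 2 := by positivity
  have hxeq : (bs n) ^ 2 + Real.log ((bs n) ^ 2) = L := by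
    have hsq : (0:ℝ) < Real.sqrt (2 * Real.pi) := Real.sqrt_pos.mpr (by positivity)
    have hlg := congrArg Real.log heq0
    rw [Real.log_mul (by positivity) (Real.exp_ne_zero _), Real.log_mul
      (by positivity) (by positivity), Real.log_inv, Real.log_inv,
      Real.log_exp, Real.log_div one_ne_zero hn0.ne', Real.log_one,
      Real.log_sqrt (by positivity)] at hlg
    rw [Real.log_pow, hLval]
    push_cast
    linarith
  have hbnd := main_est_aux L ((bs n)^2) (Real.log L)
    (L - Real.log L + Real.log L / L) (Real.log L / L - Real.log L / L ^ 2)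
    hL10 hx0 hxeq rfl rfl rfl
  rw [Real.sqrt_sq hb0.le] at hbnd
  -- final comparison
  have hpos1 : (0:ℝ) < (Real.log n) ^ ((5:ℝ)/2) := Real.rpow_pos_of_pos hlogn0 _
  have hposL : (0:ℝ) < L ^ ((5:ℝ)/2) := Real.rpow_pos_of_pos hL0 _
  have hmono : (Real.log n) ^ ((5:ℝ)/2) ≤ L ^ ((5:ℝ)/2) :=
    Real.rpow_le_rpow hlogn0.le hLlogn (by norm_num)
  have hnum : (Real.log L) ^ 2 ≤ 4 * (Real.log (Real.log n)) ^ 2 := by nlinarith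
  have hfinal : 5 * (Real.log L) ^ 2 / L ^ ((5:ℝ)/2) ≤
      20 * ((Real.log (Real.log n)) ^ 2 / (Real.log n) ^ ((5:ℝ)/2)) := by
    rw [mul_div_assoc'] at *
    rw [div_le_div_iff₀ hposL hpos1]
    have h1 : 5 * Real.log L ^ 2 * (Real.log n) ^ ((5:ℝ)/2) ≤
        20 * Real.log (Real.log n) ^ 2 * (Real.log n) ^ ((5:ℝ)/2) := by nlinarith
    have h2 : 20 * Real.log (Real.log n) ^ 2 * (Real.log n) ^ ((5:ℝ)/2) ≤
        20 * Real.log (Real.log n) ^ 2 * L ^ ((5:ℝ)/2) := by nlinarith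
    linarith
  rw [Real.norm_eq_abs, Real.norm_eq_abs]
  have hR0 : (0:ℝ) ≤ (Real.log (Real.log n)) ^ 2 / (Real.log n) ^ ((5:ℝ)/2) := by positivity
  rw [abs_of_nonneg hR0]
  linarith [hbnd]
end

section
/- For every real y ≥ 1, (4/e²)·y²·exp(((2 − 23 y²)/(10 (y² + 1)))·log y) < 2/3. -/
open Real

/-- For `y ≥ 1`, `log y ≤ (y² − 1)/(2y)`. -/
lemma log_le_sq_aux (y : ℝ) (hy : 1 ≤ y) : Real.log y ≤ (y ^ 2 - 1) / (2 * y) := by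
  have hy0 : (0:ℝ) < y := by linarith
  set t : ℝ := (y ^ 2 - 1) / (2 * y) with ht
  have ht0 : 0 ≤ t := by
    apply div_nonneg
    · nlinarith
    · linarith
  have hq : 1 + t + t ^ 2 / 2 ≤ Real.exp t := Real.quadratic_le_exp_of_nonneg ht0
  have hyle : y ≤ Real.exp t := by
    have htm : t * (2 * y) = y ^ 2 - 1 := by
      rw [ht]; field_simp
    have h1 : y ≤ 1 + t + t ^ 2 / 2 := by
      nlinarith [sq_nonneg ((y - 1) ^ 2), sq_nonneg (y - 1), mul_pos hy0 hy0,
        sq_nonneg (t * y - (y - 1)), sq_nonneg t]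
    linarith
  calc Real.log y ≤ Real.log (Real.exp t) := Real.log_le_log hy0 hyle
    _ = t := Real.log_exp t

/-- Key exponent bound: for `y ≥ 1`,
`2·log y + ((2 − 23 y²)/(10 (y²+1)))·log y ≤ 1/5`. -/
lemma exponent_bound (y : ℝ) (hy : 1 ≤ y) :
    2 * Real.log y + (2 - 23 * y ^ 2) / (10 * (y ^ 2 + 1)) * Real.log y ≤ 1 / 5 := by
  have hy0 : (0:ℝ) < y := by linarith
  have hL0 : 0 ≤ Real.log y := Real.log_nonneg hy
  have hden : (0:ℝ) < 10 * (y ^ 2 + 1) := by positivity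
  have hcomb : 2 * Real.log y + (2 - 23 * y ^ 2) / (10 * (y ^ 2 + 1)) * Real.log y
      = (22 - 3 * y ^ 2) / (10 * (y ^ 2 + 1)) * Real.log y := by
    field_simp
    ring
  rw [hcomb]
  rcases le_or_gt (22 - 3 * y ^ 2) 0 with hneg | hpos
  · have : (22 - 3 * y ^ 2) / (10 * (y ^ 2 + 1)) ≤ 0 :=
      div_nonpos_of_nonpos_of_nonneg hneg (le_of_lt hden)
    nlinarith [mul_nonpos_of_nonpos_of_nonneg this hL0]
  · have hLle := log_le_sq_aux y hy
    have hcoef : 0 ≤ (22 - 3 * y ^ 2) / (10 * (y ^ 2 + 1)) :=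
      div_nonneg (le_of_lt hpos) (le_of_lt hden)
    have h1 : (22 - 3 * y ^ 2) / (10 * (y ^ 2 + 1)) * Real.log y
        ≤ (22 - 3 * y ^ 2) / (10 * (y ^ 2 + 1)) * ((y ^ 2 - 1) / (2 * y)) :=
      mul_le_mul_of_nonneg_left hLle hcoef
    have h2 : (22 - 3 * y ^ 2) / (10 * (y ^ 2 + 1)) * ((y ^ 2 - 1) / (2 * y)) ≤ 1 / 5 := by
      rw [div_mul_div_comm, div_le_div_iff₀ (by positivity) (by norm_num)]
      nlinarith [sq_nonneg ((y - 1) ^ 2 + (113/50) * (y - 1) - 163/100),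
        mul_nonneg (sub_nonneg.2 hy) (sq_nonneg ((1562/1000) * (y - 1) - 174/1000)),
        sub_nonneg.2 hy, sq_nonneg (y - 1)]
    linarith

/-- For every real `y ≥ 1`, `(4/e²)·y²·exp(((2 − 23 y²)/(10 (y² + 1)))·log y) < 2/3`. -/
theorem aux_ineq_P (y : ℝ) (hy : 1 ≤ y) :
    4 / Real.exp 1 ^ 2 * y ^ 2 *
        Real.exp ((2 - 23 * y ^ 2) / (10 * (y ^ 2 + 1)) * Real.log y) < 2 / 3 := by
  have hy0 : (0:ℝ) < y := by linarith
  have hysq : y ^ 2 = Real.exp (2 * Real.log y) := by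
    rw [show (2:ℝ) * Real.log y = Real.log (y ^ 2) by rw [Real.log_pow]; push_cast; ring,
      Real.exp_log (by positivity)]
  have he2 : Real.exp 1 ^ 2 = Real.exp 2 := by
    rw [← Real.exp_nat_mul]; norm_num
  have hrw : 4 / Real.exp 1 ^ 2 * y ^ 2 *
      Real.exp ((2 - 23 * y ^ 2) / (10 * (y ^ 2 + 1)) * Real.log y)
      = 4 * Real.exp (2 * Real.log y + (2 - 23 * y ^ 2) / (10 * (y ^ 2 + 1)) * Real.log y - 2) := by
    rw [hysq, he2]
    rw [Real.exp_sub, Real.exp_add]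
    field_simp
  rw [hrw]
  have hexp := exponent_bound y hy
  have hle : Real.exp (2 * Real.log y + (2 - 23 * y ^ 2) / (10 * (y ^ 2 + 1)) * Real.log y - 2)
      ≤ Real.exp (1 / 5 - 2) := Real.exp_le_exp.2 (by linarith)
  have hkey : Real.exp (1 / 5 - 2) < 1 / 6 := by
    have h19 : (19/20 : ℝ) ≤ Real.exp (-(1/20 : ℝ)) := by
      have := Real.add_one_le_exp (-(1/20 : ℝ)); linarith
    have hpow : ((19/20 : ℝ)) ^ 4 ≤ Real.exp (-(1/20 : ℝ)) ^ 4 :=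
      pow_le_pow_left₀ (by norm_num) h19 4
    have hexp15 : Real.exp (-(1/20 : ℝ)) ^ 4 = Real.exp (-(1/5 : ℝ)) := by
      rw [← Real.exp_nat_mul]; norm_num
    have hlow : ((19/20 : ℝ)) ^ 4 ≤ Real.exp (-(1/5 : ℝ)) := by
      rw [← hexp15]; exact hpow
    have hup : Real.exp (1/5 : ℝ) ≤ (20/19 : ℝ) ^ 4 := by
      have hmul : Real.exp (1/5 : ℝ) * Real.exp (-(1/5 : ℝ)) = 1 := by
        rw [← Real.exp_add]; norm_num
      have hp : (0:ℝ) < Real.exp (1/5 : ℝ) := Real.exp_pos _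
      nlinarith
    have hE : (2.7182818283 : ℝ) < Real.exp 1 := Real.exp_one_gt_d9
    have hk2 : Real.exp (1/5 - 2 : ℝ) = Real.exp (1/5 : ℝ) / Real.exp 1 ^ 2 := by
      rw [Real.exp_sub, he2]
    rw [hk2, div_lt_iff₀ (by positivity)]
    nlinarith
  calc 4 * Real.exp (2 * Real.log y + (2 - 23 * y ^ 2) / (10 * (y ^ 2 + 1)) * Real.log y - 2)
      ≤ 4 * Real.exp (1 / 5 - 2) := by linarith [hle]
    _ < 4 * (1/6) := by linarith [hkey]
    _ = 2/3 := by norm_num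
end
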